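/- Let f* : [−π, π] → ℝ be defined by f*(t) = π²/4 − t² for t ∈ [−π/2, π/2] and f*(t) = 0 for t ∈ [−π, −π/2) ∪ (π/2, π], and let its Fourier coefficients be f̂*(k) = (1/(2π)) ∫_{−π}^{π} f*(t) exp(−ikt) dt for k ∈ ℤ. Then f̂*(0) = π²/12, and for every integer k ≥ 1 one has |f̂*(k)| ≥ 2/(π k³). -/

import Mathlib

open MeasureTheory

/-- The function `f*(t) = π²/4 - t²` on `[-π/2, π/2]`, extended by `0`. -/
noncomputable def fstar (t : ℝ) : ℝ :=
  if |t| ≤ Real.pi / 2 then Real.pi ^ 2 / 4 - t ^ 2 else 0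

/-- The `k`-th Fourier coefficient `f̂*(k) = (1/(2π)) ∫_{-π}^{π} f*(t) exp(-ikt) dt`. -/
noncomputable def fstarFourierCoeff (k : ℤ) : ℂ :=
  (1 / (2 * (Real.pi : ℂ))) *
    ∫ t in (-Real.pi)..Real.pi, (fstar t : ℂ) * Complex.exp (-Complex.I * (k : ℂ) * (t : ℂ))

lemma fstar_integral_reduce (g : ℝ → ℂ) :
    (∫ t in (-Real.pi)..Real.pi, (fstar t : ℂ) * g t)
      = ∫ t in (-(Real.pi/2))..(Real.pi/2), ((Real.pi ^ 2 / 4 - t ^ 2 : ℝ) : ℂ) * g t := by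
  have hπ := Real.pi_pos
  have h1 : ∀ t : ℝ, (fstar t : ℂ) * g t =
      Set.indicator (Set.Icc (-(Real.pi/2)) (Real.pi/2))
        (fun t => ((Real.pi ^ 2 / 4 - t ^ 2 : ℝ) : ℂ) * g t) t := by
    intro t
    unfold fstar
    by_cases h : |t| ≤ Real.pi / 2
    · rw [Set.indicator_of_mem]
      · simp [h]
      · rcases abs_le.mp h with ⟨ha, hb⟩
        exact ⟨ha, hb⟩
    · rw [Set.indicator_of_notMem]
      · simp [h]
      · intro hm
        exact h (abs_le.mpr ⟨hm.1, hm.2⟩)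
  simp_rw [h1]
  rw [intervalIntegral.integral_of_le (by linarith),
      intervalIntegral.integral_of_le (by linarith),
      MeasureTheory.setIntegral_indicator measurableSet_Icc]
  have hsub : Set.Ioc (-Real.pi) Real.pi ∩ Set.Icc (-(Real.pi/2)) (Real.pi/2)
      = Set.Icc (-(Real.pi/2)) (Real.pi/2) := by
    apply Set.inter_eq_self_of_subset_right
    intro x hx
    exact ⟨by linarith [hx.1], by linarith [hx.2]⟩
  rw [hsub, MeasureTheory.integral_Icc_eq_integral_Ioc]

lemma hasDerivAt_G (c : ℂ) (t : ℝ) :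
    HasDerivAt (fun t : ℝ => Complex.exp (c * t) *
        (((Real.pi : ℂ) ^ 2 / 4 - (t : ℂ) ^ 2) * c ^ 2 + 2 * t * c - 2))
      (c ^ 3 * (((Real.pi : ℂ) ^ 2 / 4 - (t : ℂ) ^ 2) * Complex.exp (c * t))) t := by
  have hid : HasDerivAt (fun t : ℝ => (t : ℂ)) 1 t := by
    exact (hasDerivAt_id t).ofReal_comp
  have hexp : HasDerivAt (fun t : ℝ => Complex.exp (c * t)) (Complex.exp (c * t) * c) t := by
    have := (hid.const_mul c).cexp
    simpa using this
  have hsq : HasDerivAt (fun t : ℝ => ((t : ℂ)) ^ 2) (2 * (t : ℂ)) t := by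
    have := hid.pow 2
    exact this.congr_deriv (by push_cast; ring)
  have h2 : HasDerivAt (fun t : ℝ => ((Real.pi : ℂ) ^ 2 / 4 - (t : ℂ) ^ 2)) (-(2 * (t : ℂ))) t :=
    hsq.const_sub ((Real.pi : ℂ) ^ 2 / 4)
  have hQ : HasDerivAt (fun t : ℝ =>
      ((Real.pi : ℂ) ^ 2 / 4 - (t : ℂ) ^ 2) * c ^ 2 + 2 * t * c - 2)
      ((-(2 * (t : ℂ))) * c ^ 2 + 2 * c) t := by
    have h3 := (h2.mul_const (c ^ 2)).add ((hid.const_mul (2:ℂ)).mul_const c)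
    have h4 := h3.sub_const 2
    exact h4.congr_deriv (by ring)
  have := hexp.mul hQ
  exact this.congr_deriv (by ring)

lemma integral_poly_exp (c : ℂ) :
    c ^ 3 * (∫ t in (-(Real.pi/2))..(Real.pi/2),
        ((Real.pi ^ 2 / 4 - t ^ 2 : ℝ) : ℂ) * Complex.exp (c * t))
      = Complex.exp (c * ((Real.pi : ℂ)/2)) * ((Real.pi : ℂ) * c - 2)
        - Complex.exp (-(c * ((Real.pi : ℂ)/2))) * (-(Real.pi : ℂ) * c - 2) := by
  have heq : (fun t : ℝ => ((Real.pi ^ 2 / 4 - t ^ 2 : ℝ) : ℂ) * Complex.exp (c * t))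
      = fun t : ℝ => ((Real.pi : ℂ) ^ 2 / 4 - (t : ℂ) ^ 2) * Complex.exp (c * t) := by
    funext t; push_cast; ring
  rw [heq, ← intervalIntegral.integral_const_mul]
  have hint : IntervalIntegrable
      (fun t : ℝ => c ^ 3 * (((Real.pi : ℂ) ^ 2 / 4 - (t : ℂ) ^ 2) * Complex.exp (c * t)))
      volume (-(Real.pi/2)) (Real.pi/2) := by
    apply Continuous.intervalIntegrable
    fun_prop
  rw [intervalIntegral.integral_eq_sub_of_hasDerivAt (fun t _ => hasDerivAt_G c t) hint]
  have e1 : ((↑(Real.pi/2) : ℂ)) = (Real.pi : ℂ) / 2 := by push_cast; ring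
  have e2 : ((↑(-(Real.pi/2)) : ℂ)) = -((Real.pi : ℂ) / 2) := by push_cast; ring
  rw [e1, e2, show c * -((Real.pi:ℂ)/2) = -(c * ((Real.pi:ℂ)/2)) by ring]
  ring

lemma coeff_eq (k : ℤ) (hk : k ≠ 0) :
    fstarFourierCoeff k =
      (((-Real.cos ((k:ℝ) * Real.pi / 2) * Real.pi * (k:ℝ) + 2 * Real.sin ((k:ℝ) * Real.pi / 2))
          / (Real.pi * (k:ℝ) ^ 3) : ℝ) : ℂ) := by
  have hπ := Real.pi_pos
  have hkC : ((k:ℂ)) ≠ 0 := Int.cast_ne_zero.mpr hk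
  have hπC : ((Real.pi : ℂ)) ≠ 0 := Complex.ofReal_ne_zero.mpr hπ.ne'
  set c : ℂ := -Complex.I * (k : ℂ) with hc
  have hcne : c ≠ 0 := by
    rw [hc]
    exact mul_ne_zero (neg_ne_zero.mpr Complex.I_ne_zero) hkC
  have hc3 : c ^ 3 ≠ 0 := pow_ne_zero _ hcne
  unfold fstarFourierCoeff
  rw [fstar_integral_reduce (fun t => Complex.exp (-Complex.I * (k : ℂ) * (t : ℂ)))]
  have hIeq : (∫ t in (-(Real.pi/2))..(Real.pi/2),
      ((Real.pi ^ 2 / 4 - t ^ 2 : ℝ) : ℂ) * Complex.exp (-Complex.I * (k : ℂ) * (t : ℂ)))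
      = (Complex.exp (c * ((Real.pi : ℂ)/2)) * ((Real.pi : ℂ) * c - 2)
        - Complex.exp (-(c * ((Real.pi : ℂ)/2))) * (-(Real.pi : ℂ) * c - 2)) / c ^ 3 := by
    rw [eq_div_iff hc3, mul_comm]
    rw [show (fun t : ℝ => ((Real.pi ^ 2 / 4 - t ^ 2 : ℝ) : ℂ)
        * Complex.exp (-Complex.I * (k : ℂ) * (t : ℂ)))
      = fun t : ℝ => ((Real.pi ^ 2 / 4 - t ^ 2 : ℝ) : ℂ) * Complex.exp (c * (t : ℂ)) by
        funext t; rw [hc]]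
    exact integral_poly_exp c
  rw [hIeq]
  have hE1 : Complex.exp (c * ((Real.pi : ℂ)/2))
      = ((Real.cos ((k:ℝ) * Real.pi / 2) : ℝ) : ℂ)
        - ((Real.sin ((k:ℝ) * Real.pi / 2) : ℝ) : ℂ) * Complex.I := by
    rw [show c * ((Real.pi : ℂ)/2) = ((-(((k:ℝ)) * Real.pi / 2) : ℝ) : ℂ) * Complex.I by
      rw [hc]; push_cast; ring]
    rw [Complex.exp_mul_I, ← Complex.ofReal_cos, ← Complex.ofReal_sin,
      Real.cos_neg, Real.sin_neg]
    push_cast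
    ring
  have hE2 : Complex.exp (-(c * ((Real.pi : ℂ)/2)))
      = ((Real.cos ((k:ℝ) * Real.pi / 2) : ℝ) : ℂ)
        + ((Real.sin ((k:ℝ) * Real.pi / 2) : ℝ) : ℂ) * Complex.I := by
    rw [show -(c * ((Real.pi : ℂ)/2)) = (((((k:ℝ)) * Real.pi / 2) : ℝ) : ℂ) * Complex.I by
      rw [hc]; push_cast; ring]
    rw [Complex.exp_mul_I, ← Complex.ofReal_cos, ← Complex.ofReal_sin]
  rw [hE1, hE2, hc]
  rw [Complex.ofReal_div]
  rw [div_mul_div_comm, one_mul]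
  rw [div_eq_div_iff (mul_ne_zero (mul_ne_zero two_ne_zero hπC)
      (pow_ne_zero 3 (mul_ne_zero (neg_ne_zero.mpr Complex.I_ne_zero) hkC)))
    (Complex.ofReal_ne_zero.mpr
      (mul_ne_zero hπ.ne' (pow_ne_zero 3 ((Int.cast_ne_zero (α := ℝ)).mpr hk))))]
  push_cast
  linear_combination (2 * (Real.pi:ℂ) * (k:ℂ)^3 * Complex.I *
    (-(Complex.cos ((k:ℂ) * (Real.pi:ℂ) / 2)) * (Real.pi:ℂ) * (k:ℂ)
      + 2 * Complex.sin ((k:ℂ) * (Real.pi:ℂ) / 2))) * Complex.I_sq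

lemma coeff_zero : fstarFourierCoeff 0 = ((Real.pi ^ 2 / 12 : ℝ) : ℂ) := by
  have hπ := Real.pi_pos
  unfold fstarFourierCoeff
  rw [fstar_integral_reduce (fun t => Complex.exp (-Complex.I * ((0:ℤ) : ℂ) * (t : ℂ)))]
  simp only [Int.cast_zero, mul_zero, zero_mul, Complex.exp_zero, mul_one]
  rw [intervalIntegral.integral_ofReal]
  have hreal : (∫ t in (-(Real.pi/2))..(Real.pi/2), (Real.pi ^ 2 / 4 - t ^ 2))
      = Real.pi ^ 3 / 6 := by
    rw [intervalIntegral.integral_sub intervalIntegrable_const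
      (by apply Continuous.intervalIntegrable; fun_prop),
      intervalIntegral.integral_const, integral_pow]
    simp only [smul_eq_mul]
    ring
  rw [hreal]
  rw [show ((Real.pi ^ 2 / 12 : ℝ) : ℂ) = (1 / (2 * (Real.pi : ℂ))) * ((Real.pi ^ 3 / 6 : ℝ) : ℂ) by
    push_cast
    field_simp [Complex.ofReal_ne_zero.mpr hπ.ne']
    ring]

/-- The Fourier coefficients of `f*` satisfy `f̂*(0) = π²/12` and
`|f̂*(k)| ≥ 2/(π k³)` for every integer `k ≥ 1`. -/
theorem fstar_fourier_coefficient_lower_bound :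
    fstarFourierCoeff 0 = ((Real.pi ^ 2 / 12 : ℝ) : ℂ) ∧
    ∀ k : ℤ, 1 ≤ k → 2 / (Real.pi * (k : ℝ) ^ 3) ≤ ‖fstarFourierCoeff k‖ := by
  refine ⟨coeff_zero, ?_⟩
  intro k hk
  have hπ := Real.pi_pos
  have hπ3 := Real.pi_gt_three
  have hk0 : k ≠ 0 := by omega
  have hkR : (1 : ℝ) ≤ (k : ℝ) := by exact_mod_cast hk
  have hkpos : (0 : ℝ) < (k : ℝ) := by linarith
  have hD : (0 : ℝ) < Real.pi * (k : ℝ) ^ 3 := by positivity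
  rw [coeff_eq k hk0, Complex.norm_real, Real.norm_eq_abs, abs_div, abs_of_pos hD]
  rw [div_le_div_iff₀ hD hD]
  have key : 2 ≤ |(-Real.cos ((k:ℝ) * Real.pi / 2) * Real.pi * (k:ℝ)
      + 2 * Real.sin ((k:ℝ) * Real.pi / 2))| := by
    rcases Int.even_or_odd k with ⟨m, hm⟩ | ⟨m, hm⟩
    · -- even : k = m + m
      have harg : (k:ℝ) * Real.pi / 2 = (m : ℝ) * Real.pi := by
        rw [hm]; push_cast; ring
      rw [harg, Real.sin_int_mul_pi]
      have hcos := Real.abs_cos_int_mul_pi m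
      rw [show -Real.cos ((m:ℝ) * Real.pi) * Real.pi * (k:ℝ) + 2 * 0
          = -(Real.cos ((m:ℝ) * Real.pi) * (Real.pi * (k:ℝ))) by ring]
      rw [abs_neg, abs_mul, hcos, one_mul, abs_of_pos (by positivity)]
      nlinarith
    · -- odd : k = 2*m + 1
      have harg : (k:ℝ) * Real.pi / 2 = (m : ℝ) * Real.pi + Real.pi / 2 := by
        rw [hm]; push_cast; ring
      rw [harg, Real.cos_add_pi_div_two, Real.sin_add_pi_div_two, Real.sin_int_mul_pi]
      have hcos := Real.abs_cos_int_mul_pi m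
      rw [show - -0 * Real.pi * (k:ℝ) + 2 * Real.cos ((m:ℝ) * Real.pi)
          = 2 * Real.cos ((m:ℝ) * Real.pi) by ring]
      rw [abs_mul, hcos]
      norm_num
  nlinarith [abs_nonneg (-Real.cos ((k:ℝ) * Real.pi / 2) * Real.pi * (k:ℝ)
      + 2 * Real.sin ((k:ℝ) * Real.pi / 2))]
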